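/- In any graph, for disjoint vertex sets X and Y with the closed neighborhood of X connected, and for every k ≥ 0, there are at most 4^k important X–Y separators of size at most k. -/

import Mathlib

namespace SepTools

variable {W : Type}

/-- Reachability in a graph avoiding the vertex set `T`. -/
def ReachAvoid (G : SimpleGraph W) (T : Set W) (a b : W) : Prop :=
  a ∉ T ∧ b ∉ T ∧ Relation.ReflTransGen (fun x y => G.Adj x y ∧ x ∉ T ∧ y ∉ T) a b

/-- `R(X,T)` : the vertices reachable from `X` after deleting `T`. -/
def RSet (G : SimpleGraph W) (X T : Set W) : Set W := {v | ∃ x ∈ X, ReachAvoid G T x v}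

/-- `S` is an `X`–`Y` separator. -/
def IsXYSep (G : SimpleGraph W) (X Y S : Set W) : Prop :=
  Disjoint S (X ∪ Y) ∧ ∀ y ∈ Y, y ∉ RSet G X S

/-- `S₁` covers `S₂` with respect to `X`. -/
def Covers (G : SimpleGraph W) (X S₁ S₂ : Set W) : Prop :=
  RSet G X S₂ ⊂ RSet G X S₁

/-- `S₁` dominates `S₂` with respect to `X`. -/
def Dominates (G : SimpleGraph W) (X S₁ S₂ : Set W) : Prop :=
  S₁.ncard ≤ S₂.ncard ∧ Covers G X S₁ S₂

def MinimalSep (G : SimpleGraph W) (X Y S : Set W) : Prop :=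
  IsXYSep G X Y S ∧ ∀ S' ⊂ S, ¬ IsXYSep G X Y S'

def ImportantSep (G : SimpleGraph W) (X Y S : Set W) : Prop :=
  MinimalSep G X Y S ∧ ¬ ∃ S', IsXYSep G X Y S' ∧ S' ≠ S ∧ Dominates G X S' S

/-- The closed neighbourhood of `X`. -/
def ClosedNbhd (G : SimpleGraph W) (X : Set W) : Set W :=
  X ∪ {v | ∃ x ∈ X, G.Adj x v}

/-- The closed neighbourhood of `X` is connected (within itself). -/
def NbhdConnected (G : SimpleGraph W) (X : Set W) : Prop :=
  ∀ a ∈ ClosedNbhd G X, ∀ b ∈ ClosedNbhd G X, ReachAvoid G (ClosedNbhd G X)ᶜ a b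

end SepTools

set_option linter.unusedSectionVars false

namespace SepProof
open SepTools
open SepTools

variable {W : Type} {G : SimpleGraph W}

lemma reach_refl (G : SimpleGraph W) {T : Set W} {a : W} (ha : a ∉ T) : ReachAvoid G T a a :=
  ⟨ha, ha, .refl⟩

lemma reach_trans {T : Set W} {a b c : W} (h1 : ReachAvoid G T a b)
    (h2 : ReachAvoid G T b c) : ReachAvoid G T a c :=
  ⟨h1.1, h2.2.1, h1.2.2.trans h2.2.2⟩

lemma mem_RSet_self {X T : Set W} {x : W} (hx : x ∈ X) (hxT : x ∉ T) : x ∈ RSet G X T :=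
  ⟨x, hx, reach_refl G hxT⟩

lemma not_mem_of_mem_RSet {X T : Set W} {v : W} (h : v ∈ RSet G X T) : v ∉ T := by
  obtain ⟨x, _, h⟩ := h; exact h.2.1

lemma RSet_adj {X T : Set W} {v w : W} (hv : v ∈ RSet G X T) (hadj : G.Adj v w)
    (hw : w ∉ T) : w ∈ RSet G X T := by
  obtain ⟨x, hx, h1, h2, h3⟩ := hv
  exact ⟨x, hx, h1, hw, h3.tail ⟨hadj, h2, hw⟩⟩

lemma RSet_reach {X T : Set W} {v w : W} (hv : v ∈ RSet G X T)
    (h : ReachAvoid G T v w) : w ∈ RSet G X T := by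
  obtain ⟨x, hx, hxv⟩ := hv
  exact ⟨x, hx, reach_trans hxv h⟩

lemma RSet_mono_X {X X' T : Set W} (h : X ⊆ X') : RSet G X T ⊆ RSet G X' T := by
  rintro v ⟨x, hx, hr⟩; exact ⟨x, h hx, hr⟩

lemma RSet_anti {X T T' : Set W} (h : T' ⊆ T) : RSet G X T ⊆ RSet G X T' := by
  rintro v ⟨x, hx, h1, h2, h3⟩
  refine ⟨x, hx, fun c => h1 (h c), fun c => h2 (h c), Relation.ReflTransGen.mono ?_ _ _ h3⟩
  rintro a b ⟨hab, ha, hb⟩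
  exact ⟨hab, fun c => ha (h c), fun c => hb (h c)⟩

/-- If `A` contains `X` and is closed under `T'`-avoiding adjacency, it contains `RSet G X T'`. -/
lemma RSet_subset_closed {X T' A : Set W} (hX : X ⊆ A)
    (hcl : ∀ b w, b ∈ A → G.Adj b w → w ∉ T' → w ∈ A) : RSet G X T' ⊆ A := by
  rintro v ⟨x, hx, h1, h2, h3⟩
  clear h2
  induction h3 with
  | refl => exact hX hx
  | tail h3 h4 ih => exact hcl _ _ ih h4.1 h4.2.2

/-- internal connectivity of reach sets -/
lemma RSet_subset_of_disjoint {X T T' : Set W} (hd : ∀ v ∈ RSet G X T, v ∉ T') :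
    RSet G X T ⊆ RSet G X T' := by
  rintro v ⟨x, hx, h1, h2, h3⟩
  have key : ∀ c, Relation.ReflTransGen (fun a b => G.Adj a b ∧ a ∉ T ∧ b ∉ T) x c →
      (c ∉ T → c ∈ RSet G X T') := by
    intro c hc
    induction hc with
    | refl =>
      intro _
      have hx' : x ∈ RSet G X T := ⟨x, hx, h1, h1, .refl⟩
      exact mem_RSet_self hx (hd _ hx')
    | tail hbc hstep ih =>
      intro hcT
      have hc' : _ ∈ RSet G X T := ⟨x, hx, h1, hcT, hbc.tail hstep⟩
      exact RSet_adj (ih hstep.2.1) hstep.1 (hd _ hc')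
  exact key v h3 h2


variable [Fintype W]

/-- `X`–`Y` separator relative to an ambient deleted set `D`. -/
def SepD (G : SimpleGraph W) (D X Y S : Set W) : Prop :=
  Disjoint S (X ∪ Y) ∧ Disjoint S D ∧ ∀ y ∈ Y, y ∉ RSet G X (S ∪ D)

def MinSepD (G : SimpleGraph W) (D X Y S : Set W) : Prop :=
  SepD G D X Y S ∧ ∀ S' ⊂ S, ¬ SepD G D X Y S'

def ImpSepD (G : SimpleGraph W) (D X Y S : Set W) : Prop :=
  MinSepD G D X Y S ∧
  ¬ ∃ S', SepD G D X Y S' ∧ S' ≠ S ∧ S'.ncard ≤ S.ncard ∧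
    RSet G X (S ∪ D) ⊂ RSet G X (S' ∪ D)

/-- the `D`-avoiding boundary of a set -/
def Bd (G : SimpleGraph W) (D A : Set W) : Set W :=
  {v | v ∉ A ∧ v ∉ D ∧ ∃ a ∈ A, G.Adj a v}

variable {D X Y S : Set W}

lemma bd_RSet_subset {T : Set W} : Bd G D (RSet G X (T ∪ D)) ⊆ T := by
  rintro v ⟨hvA, hvD, a, ha, hadj⟩
  by_contra hvT
  exact hvA (RSet_adj ha hadj (by simp [hvT, hvD]))

/-- reach avoiding the boundary (plus `D`) stays inside `A`. -/
lemma bd_closure {A : Set W} (hX : X ⊆ A) : RSet G X (Bd G D A ∪ D) ⊆ A := by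
  refine RSet_subset_closed hX ?_
  intro b w hb hadj hw
  by_contra hwA
  simp only [Set.mem_union, not_or] at hw
  exact hw.1 ⟨hwA, hw.2, b, hb, hadj⟩

lemma bd_union_subset {A B : Set W} : Bd G D (A ∪ B) ⊆ Bd G D A ∪ Bd G D B := by
  rintro v ⟨hv, hvD, a, ha, hadj⟩
  simp only [Set.mem_union, not_or] at hv
  rcases ha with ha | ha
  · exact Or.inl ⟨hv.1, hvD, a, ha, hadj⟩
  · exact Or.inr ⟨hv.2, hvD, a, ha, hadj⟩

lemma bd_inter_subset {A B : Set W} : Bd G D (A ∩ B) ⊆ Bd G D A ∪ Bd G D B := by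
  rintro v ⟨hv, hvD, a, ha, hadj⟩
  by_cases hvA : v ∈ A
  · exact Or.inr ⟨fun hB => hv ⟨hvA, hB⟩, hvD, a, ha.2, hadj⟩
  · exact Or.inl ⟨hvA, hvD, a, ha.1, hadj⟩

lemma bd_submodular {A B : Set W} :
    (Bd G D (A ∪ B)).ncard + (Bd G D (A ∩ B)).ncard ≤
      (Bd G D A).ncard + (Bd G D B).ncard := by
  have h1 : (Bd G D (A ∪ B)) ∪ (Bd G D (A ∩ B)) ⊆ Bd G D A ∪ Bd G D B :=
    Set.union_subset bd_union_subset bd_inter_subset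
  have h2 : (Bd G D (A ∪ B)) ∩ (Bd G D (A ∩ B)) ⊆ Bd G D A ∩ Bd G D B := by
    rintro v ⟨⟨hv1, hvD, a1, ha1, hadj1⟩, ⟨hv2, _, a2, ha2, hadj2⟩⟩
    simp only [Set.mem_union, not_or] at hv1
    exact ⟨⟨hv1.1, hvD, a2, ha2.1, hadj2⟩, ⟨hv1.2, hvD, a2, ha2.2, hadj2⟩⟩
  have e1 := Set.ncard_union_add_ncard_inter (Bd G D (A ∪ B)) (Bd G D (A ∩ B))
    (Set.toFinite _) (Set.toFinite _)
  have e2 := Set.ncard_union_add_ncard_inter (Bd G D A) (Bd G D B)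
    (Set.toFinite _) (Set.toFinite _)
  have l1 : ((Bd G D (A ∪ B)) ∪ (Bd G D (A ∩ B))).ncard ≤ (Bd G D A ∪ Bd G D B).ncard :=
    Set.ncard_le_ncard h1 (Set.toFinite _)
  have l2 : ((Bd G D (A ∪ B)) ∩ (Bd G D (A ∩ B))).ncard ≤ (Bd G D A ∩ Bd G D B).ncard :=
    Set.ncard_le_ncard h2 (Set.toFinite _)
  omega

/-- a minimal separator equals the boundary of its reach set -/
lemma minimal_eq_bd (hXD : Disjoint X D) (h : MinSepD G D X Y S) :
    S = Bd G D (RSet G X (S ∪ D)) := by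
  obtain ⟨⟨hdisj, hD, hsep⟩, hmin⟩ := h
  set B := RSet G X (S ∪ D) with hB
  apply Set.Subset.antisymm _ bd_RSet_subset
  intro s hs
  have hsB : s ∉ B := fun h => (not_mem_of_mem_RSet h) (Or.inl hs)
  have hsD : s ∉ D := fun h => hD.ne_of_mem hs h rfl
  refine ⟨hsB, hsD, ?_⟩
  by_contra hno
  push_neg at hno
  -- then S \ {s} is a separator, contradicting minimality
  refine hmin (S \ {s}) ⟨Set.diff_subset, fun h => hsB ?_⟩ ?_
  · exact absurd (h hs) (by simp)
  · refine ⟨hdisj.mono_left Set.diff_subset, hD.mono_left Set.diff_subset, ?_⟩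
    intro y hy hyR
    have hsub : RSet G X ((S \ {s}) ∪ D) ⊆ B := by
      refine RSet_subset_closed (fun x hx => mem_RSet_self hx ?_) ?_
      · intro hc
        rcases hc with hc | hc
        · exact hdisj.ne_of_mem hc (Or.inl hx) rfl
        · exact hXD.ne_of_mem hx hc rfl
      · intro b w hb hadj hw
        by_cases hwS : w ∈ S ∪ D
        · rcases hwS with hwS | hwS
          · have hws : w = s := by
              by_contra hne
              exact hw (Or.inl ⟨hwS, by simp [hne]⟩)
            exact absurd hadj (hws ▸ fun h => hno b hb h)
          · exact absurd (Or.inr hwS) hw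
        · exact RSet_adj hb hadj hwS
    exact hsep y hy (hsub hyR)

/-- a minimum-size separator is minimal -/
lemma minsize_minimal (hS : SepD G D X Y S)
    (hmin : ∀ S0, SepD G D X Y S0 → S.ncard ≤ S0.ncard) : MinSepD G D X Y S := by
  refine ⟨hS, fun S' hlt hS' => ?_⟩
  have := Set.ncard_lt_ncard hlt (Set.toFinite _)
  exact absurd (hmin S' hS') (by omega)


lemma X_subset_RSet (hXD : Disjoint X D) (h : SepD G D X Y S) : X ⊆ RSet G X (S ∪ D) := by
  intro x hx
  refine mem_RSet_self hx ?_
  rintro (h' | h')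
  · exact h.1.ne_of_mem h' (Or.inl hx) rfl
  · exact hXD.ne_of_mem hx h' rfl

/-- The pushing lemma: the reach set of any minimum separator is contained in the
reach set of any important separator. -/
lemma pushing (hXD : Disjoint X D) {Sm : Set W} (hSm : SepD G D X Y Sm)
    (hmin : ∀ S0, SepD G D X Y S0 → Sm.ncard ≤ S0.ncard)
    (hS : ImpSepD G D X Y S) : RSet G X (Sm ∪ D) ⊆ RSet G X (S ∪ D) := by
  set A := RSet G X (Sm ∪ D) with hA
  set B := RSet G X (S ∪ D) with hB
  by_contra hcon
  obtain ⟨w, hwA, hwB⟩ := Set.not_subset.mp hcon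
  have hXA : X ⊆ A := X_subset_RSet hXD hSm
  have hXB : X ⊆ B := X_subset_RSet hXD hS.1.1
  have hYdisjSm : ∀ y ∈ Y, y ∉ Sm := fun y hy hyS => hSm.1.ne_of_mem hyS (Or.inr hy) rfl
  have hYdisjS : ∀ y ∈ Y, y ∉ S := fun y hy hyS => hS.1.1.1.ne_of_mem hyS (Or.inr hy) rfl
  set S' := Bd G D (A ∪ B) with hS'
  have hS'A : ∀ v ∈ A ∪ B, v ∉ S' := fun v hv hv' => hv'.1 hv
  -- S' is a separator
  have hsepS' : SepD G D X Y S' := by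
    refine ⟨Set.disjoint_left.mpr ?_, Set.disjoint_left.mpr fun {a} ha => ha.2.1, ?_⟩
    · rintro a ha (haX | haY)
      · exact ha.1 (Or.inl (hXA haX))
      · rcases bd_union_subset ha with h' | h'
        · exact hYdisjSm a haY (bd_RSet_subset h')
        · exact hYdisjS a haY (bd_RSet_subset h')
    · intro y hy hyR
      rcases bd_closure (fun x hx => Or.inl (hXA hx)) hyR with h' | h'
      · exact hSm.2.2 y hy h'
      · exact hS.1.1.2.2 y hy h'
  -- Bd of the intersection is a separator, hence has size ≥ |Sm|
  have hsepI : SepD G D X Y (Bd G D (A ∩ B)) := by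
    refine ⟨Set.disjoint_left.mpr ?_,
      Set.disjoint_left.mpr (fun {a} (ha : a ∈ Bd G D (A ∩ B)) => ha.2.1), ?_⟩
    · rintro a ha (haX | haY)
      · exact ha.1 ⟨hXA haX, hXB haX⟩
      · rcases bd_inter_subset ha with h' | h'
        · exact hYdisjSm a haY (bd_RSet_subset h')
        · exact hYdisjS a haY (bd_RSet_subset h')
    · intro y hy hyR
      exact hSm.2.2 y hy (bd_closure (A := A ∩ B) (fun x hx => ⟨hXA hx, hXB hx⟩) hyR).1
  -- size bound
  have hsz : S'.ncard ≤ S.ncard := by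
    have h1 : (Bd G D A).ncard ≤ Sm.ncard :=
      Set.ncard_le_ncard bd_RSet_subset (Set.toFinite _)
    have h2 : (Bd G D B).ncard ≤ S.ncard :=
      Set.ncard_le_ncard bd_RSet_subset (Set.toFinite _)
    have h3 := hmin _ hsepI
    have h4 : S'.ncard + (Bd G D (A ∩ B)).ncard ≤ (Bd G D A).ncard + (Bd G D B).ncard :=
      bd_submodular
    omega
  -- S' covers S
  have hBS' : ∀ v ∈ B, v ∉ S' ∪ D :=
    fun v hv => by rintro (h' | h')
                   · exact hS'A v (Or.inr hv) h'
                   · exact not_mem_of_mem_RSet hv (Or.inr h')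
  have hAS' : ∀ v ∈ A, v ∉ S' ∪ D :=
    fun v hv => by rintro (h' | h')
                   · exact hS'A v (Or.inl hv) h'
                   · exact not_mem_of_mem_RSet hv (Or.inr h')
  have hBsub : B ⊆ RSet G X (S' ∪ D) := RSet_subset_of_disjoint hBS'
  have hAsub : A ⊆ RSet G X (S' ∪ D) := RSet_subset_of_disjoint hAS'
  have hne : S' ≠ S := by
    intro h
    exact hwB (by rw [hB, ← h]; exact hAsub hwA)
  exact hS.2 ⟨S', hsepS', hne, hsz, Set.ssubset_def.mpr
    ⟨hBsub, fun hrev => hwB (hrev (hAsub hwA))⟩⟩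

lemma RSet_eq_of_subset {X X' T : Set W} (h1 : X ⊆ X') (h2 : X' ⊆ RSet G X T) :
    RSet G X' T = RSet G X T := by
  refine Set.Subset.antisymm ?_ (RSet_mono_X h1)
  rintro w ⟨x', hx', hr⟩
  exact RSet_reach (h2 hx') hr

/-- Branch 1: an important separator through `v` yields an important separator with `v` deleted. -/
lemma branch1 {v : W} (hv : v ∈ S) (hvXY : v ∉ X ∪ Y) (hvD : v ∉ D)
    (hS : ImpSepD G D X Y S) : ImpSepD G (D ∪ {v}) X Y (S \ {v}) := by
  have key : (S \ {v}) ∪ (D ∪ {v}) = S ∪ D := by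
    ext x
    by_cases hx : x = v
    · subst hx; simp [hv]
    · simp [hx]
  have generic : ∀ S'' : Set W, S'' ∪ (D ∪ {v}) = (S'' ∪ {v}) ∪ D := by
    intro S''
    rw [Set.union_assoc, Set.union_comm ({v} : Set W) D]
  obtain ⟨⟨⟨hd1, hd2, hsep⟩, hminS⟩, himp⟩ := hS
  have hvS' : v ∉ S \ {v} := by simp
  refine ⟨⟨⟨hd1.mono_left Set.diff_subset, ?_, ?_⟩, ?_⟩, ?_⟩
  · exact Set.disjoint_union_right.mpr ⟨hd2.mono_left Set.diff_subset,
      Set.disjoint_singleton_right.mpr hvS'⟩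
  · rw [key]; exact hsep
  · -- minimality
    intro S'' hsub hsep''
    obtain ⟨hd1'', hd2'', hreach''⟩ := hsep''
    have hvS'' : v ∉ S'' := fun h => hd2''.ne_of_mem h (Or.inr rfl) rfl
    have hT : SepD G D X Y (S'' ∪ {v}) := by
      refine ⟨Set.disjoint_union_left.mpr ⟨hd1'', Set.disjoint_singleton_left.mpr hvXY⟩,
        Set.disjoint_union_left.mpr ⟨hd2''.mono_right Set.subset_union_left,
          Set.disjoint_singleton_left.mpr hvD⟩, ?_⟩
      rw [← generic]; exact hreach''
    refine hminS (S'' ∪ {v}) ?_ hT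
    obtain ⟨w, hw, hwS''⟩ := Set.exists_of_ssubset hsub
    refine Set.ssubset_def.mpr ⟨?_, fun hrev => ?_⟩
    · rintro x (hx | hx)
      · exact (hsub.1 hx).1
      · rwa [Set.mem_singleton_iff.mp hx]
    · rcases hrev hw.1 with h' | h'
      · exact hwS'' h'
      · exact hw.2 h'
  · -- importance
    rintro ⟨S'', ⟨hd1'', hd2'', hreach''⟩, hne, hcard, hcov⟩
    have hvS'' : v ∉ S'' := fun h => hd2''.ne_of_mem h (Or.inr rfl) rfl
    have hT : SepD G D X Y (S'' ∪ {v}) := by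
      refine ⟨Set.disjoint_union_left.mpr ⟨hd1'', Set.disjoint_singleton_left.mpr hvXY⟩,
        Set.disjoint_union_left.mpr ⟨hd2''.mono_right Set.subset_union_left,
          Set.disjoint_singleton_left.mpr hvD⟩, ?_⟩
      rw [← generic]; exact hreach''
    have hScard : 1 ≤ S.ncard := by
      have := Set.ncard_pos (s := S) (Set.toFinite _) |>.mpr ⟨v, hv⟩; omega
    have hcard1 : (S'' ∪ {v}).ncard = S''.ncard + 1 := by
      rw [Set.union_singleton, Set.ncard_insert_of_notMem hvS'' (Set.toFinite _)]
    have hcard2 : (S \ {v}).ncard = S.ncard - 1 :=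
      Set.ncard_diff_singleton_of_mem hv
    refine himp ⟨S'' ∪ {v}, hT, ?_, by omega, ?_⟩
    · intro h
      apply hne
      rw [← h, Set.union_singleton, Set.insert_diff_self_of_notMem hvS'']
    · rw [← key, ← generic]
      exact hcov

/-- Branch 2: an important separator avoiding `v` (a neighbour of the minimum reach set)
is an important separator for the enlarged source set. -/
lemma branch2 (hXD : Disjoint X D) {Sm : Set W} (hSm : SepD G D X Y Sm)
    (hmin : ∀ S0, SepD G D X Y S0 → Sm.ncard ≤ S0.ncard)
    (hS : ImpSepD G D X Y S) {v a : W} (hvS : v ∉ S) (hvD : v ∉ D)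
    (ha : a ∈ RSet G X (Sm ∪ D)) (hadj : G.Adj a v) :
    ImpSepD G D (RSet G X (Sm ∪ D) ∪ {v}) Y S := by
  set A := RSet G X (Sm ∪ D) with hA
  set B := RSet G X (S ∪ D) with hB
  set X' := A ∪ {v} with hX'
  have hAB : A ⊆ B := pushing hXD hSm hmin hS
  have hvB : v ∈ B := RSet_adj (hAB ha) hadj (by rintro (h | h); exacts [hvS h, hvD h])
  have hX'B : X' ⊆ B := by
    rintro x (hx | hx)
    · exact hAB hx
    · rwa [Set.mem_singleton_iff.mp hx]
  have hXX' : X ⊆ X' := fun x hx => Or.inl (X_subset_RSet hXD hSm hx)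
  have key1 : RSet G X' (S ∪ D) = B := RSet_eq_of_subset hXX' hX'B
  obtain ⟨⟨⟨hd1, hd2, hsep⟩, hminS⟩, himp⟩ := hS
  have sep_transfer : ∀ S'' : Set W, SepD G D X' Y S'' → SepD G D X Y S'' := by
    rintro S'' ⟨hd1'', hd2'', hreach''⟩
    refine ⟨hd1''.mono_right (Set.union_subset_union_left Y hXX'), hd2'', ?_⟩
    intro y hy hyR
    exact hreach'' y hy (RSet_mono_X hXX' hyR)
  refine ⟨⟨⟨?_, hd2, ?_⟩, ?_⟩, ?_⟩
  · -- disjointness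
    refine Set.disjoint_union_right.mpr ⟨?_, hd1.mono_right Set.subset_union_right⟩
    refine Set.disjoint_left.mpr ?_
    rintro s hsS (hsA | hsv)
    · exact not_mem_of_mem_RSet (hAB hsA) (Or.inl hsS)
    · exact hvS (Set.mem_singleton_iff.mp hsv ▸ hsS)
  · -- separation
    intro y hy hyR
    rw [key1] at hyR
    exact hsep y hy hyR
  · -- minimality
    intro S'' hsub hsep''
    exact hminS S'' hsub (sep_transfer S'' hsep'')
  · -- importance
    rintro ⟨S'', hsep'', hne, hcard, hcov⟩
    rw [key1] at hcov
    have hBdisj : ∀ b ∈ B, b ∉ S'' ∪ D := fun b hb => not_mem_of_mem_RSet (hcov.1 hb)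
    have hBsub : B ⊆ RSet G X (S'' ∪ D) := RSet_subset_of_disjoint hBdisj
    have key2 : RSet G X' (S'' ∪ D) = RSet G X (S'' ∪ D) :=
      RSet_eq_of_subset hXX' (fun x hx => hBsub (hX'B hx))
    rw [key2] at hcov
    exact himp ⟨S'', sep_transfer S'' hsep'', hne, hcard, hcov⟩

lemma sep_union_v {v : W} (hvXY : v ∉ X ∪ Y) (hvD : v ∉ D) {S0 : Set W}
    (h : SepD G (D ∪ {v}) X Y S0) : SepD G D X Y (S0 ∪ {v}) := by
  obtain ⟨hd1, hd2, hreach⟩ := h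
  refine ⟨Set.disjoint_union_left.mpr ⟨hd1, Set.disjoint_singleton_left.mpr hvXY⟩,
    Set.disjoint_union_left.mpr ⟨hd2.mono_right Set.subset_union_left,
      Set.disjoint_singleton_left.mpr hvD⟩, ?_⟩
  rw [Set.union_assoc, Set.union_comm ({v} : Set W) D]
  exact hreach

lemma lambda_increase (hXD : Disjoint X D) {Sm : Set W} (hSm : SepD G D X Y Sm)
    (hmax : ∀ S0, SepD G D X Y S0 → S0.ncard = Sm.ncard →
      ¬ ((RSet G X (Sm ∪ D)).ncard < (RSet G X (S0 ∪ D)).ncard))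
    (hmin : ∀ S0, SepD G D X Y S0 → Sm.ncard ≤ S0.ncard)
    {v a : W} (hvD : v ∉ D) (hvA : v ∉ RSet G X (Sm ∪ D))
    (ha : a ∈ RSet G X (Sm ∪ D)) (hadj : G.Adj a v) :
    ∀ S0, SepD G D (RSet G X (Sm ∪ D) ∪ {v}) Y S0 → Sm.ncard + 1 ≤ S0.ncard := by
  set A := RSet G X (Sm ∪ D) with hA
  set X' := A ∪ {v} with hX'
  intro S0 hsep0
  have hXX' : X ⊆ X' := fun x hx => Or.inl (X_subset_RSet hXD hSm hx)
  have hsep0X : SepD G D X Y S0 := by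
    obtain ⟨hd1, hd2, hreach⟩ := hsep0
    refine ⟨hd1.mono_right (Set.union_subset_union_left Y hXX'), hd2, ?_⟩
    intro y hy hyR
    exact hreach y hy (RSet_mono_X hXX' hyR)
  by_contra hcon
  have heq : S0.ncard = Sm.ncard := le_antisymm (by omega) (hmin S0 hsep0X)
  refine hmax S0 hsep0X heq ?_
  have hAd : ∀ b ∈ A, b ∉ S0 ∪ D := by
    rintro b hb (h' | h')
    · exact hsep0.1.ne_of_mem h' (Or.inl (Or.inl hb)) rfl
    · exact not_mem_of_mem_RSet hb (Or.inr h')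
  have hAsub : A ⊆ RSet G X (S0 ∪ D) := RSet_subset_of_disjoint hAd
  have hvR : v ∈ RSet G X (S0 ∪ D) := by
    refine RSet_adj (hAsub ha) hadj ?_
    rintro (h' | h')
    · exact hsep0.1.ne_of_mem h' (Or.inl (Or.inr rfl)) rfl
    · exact hvD h'
  exact Set.ncard_lt_ncard (Set.ssubset_def.mpr
    ⟨hAsub, fun hrev => hvA (hrev hvR)⟩) (Set.toFinite _)

lemma main : ∀ n k : ℕ, ∀ X D : Set W, Disjoint X D → Disjoint Y D →
    (∀ S0, SepD G D X Y S0 → 2 * k ≤ n + S0.ncard) →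
    {S : Set W | ImpSepD G D X Y S ∧ S.ncard ≤ k}.ncard ≤ 2 ^ n := by
  intro n
  induction n using Nat.strong_induction_on with
  | _ n IH =>
  intro k X D hXD hYD hbound
  by_cases hne : {S : Set W | ImpSepD G D X Y S ∧ S.ncard ≤ k}.Nonempty
  swap
  · rw [Set.not_nonempty_iff_eq_empty.mp hne, Set.ncard_empty]
    exact Nat.zero_le _
  obtain ⟨S1, hS1, hS1k⟩ := hne
  have hLne : {m | ∃ S0, SepD G D X Y S0 ∧ S0.ncard = m}.Nonempty :=
    ⟨S1.ncard, S1, hS1.1.1, rfl⟩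
  obtain ⟨Sm0, hSm0, hSm0card⟩ := Nat.sInf_mem hLne
  have hmin0 : ∀ S0, SepD G D X Y S0 → Sm0.ncard ≤ S0.ncard := by
    intro S0 h
    rw [hSm0card]
    exact Nat.sInf_le ⟨S0, h, rfl⟩
  by_cases hlam : Sm0.ncard = 0
  · -- the empty set is the unique important separator
    have hSm0e : Sm0 = ∅ := (Set.ncard_eq_zero (Set.toFinite _)).mp hlam
    have hsub : {S : Set W | ImpSepD G D X Y S ∧ S.ncard ≤ k} ⊆ {(∅ : Set W)} := by
      rintro S ⟨hS, -⟩
      by_contra hSne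
      refine hS.1.2 ∅ ?_ (hSm0e ▸ hSm0)
      exact Set.ssubset_iff_of_subset (Set.empty_subset S) |>.mpr
        (Set.nonempty_iff_ne_empty.mpr (by simpa using hSne) |>.imp fun w hw => ⟨hw, by simp⟩)
    calc {S : Set W | ImpSepD G D X Y S ∧ S.ncard ≤ k}.ncard
        ≤ ({(∅ : Set W)} : Set (Set W)).ncard := Set.ncard_le_ncard hsub (Set.toFinite _)
      _ = 1 := Set.ncard_singleton _
      _ ≤ 2 ^ n := Nat.one_le_two_pow
  · -- pick a maximal-reach minimum separator Sm and a vertex v ∈ Sm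
    obtain ⟨Sm, hSmM, hmaxwrt⟩ := Set.Finite.exists_maximalFor
      (fun S0 => (RSet G X (S0 ∪ D)).ncard)
      {S0 | SepD G D X Y S0 ∧ S0.ncard = Sm0.ncard} (Set.toFinite _) ⟨Sm0, hSm0, rfl⟩
    obtain ⟨hSm, hSmcard⟩ := hSmM
    have hminSm : ∀ S0, SepD G D X Y S0 → Sm.ncard ≤ S0.ncard := by
      intro S0 h; rw [hSmcard]; exact hmin0 S0 h
    have hmax : ∀ S0, SepD G D X Y S0 → S0.ncard = Sm.ncard →
        ¬ ((RSet G X (Sm ∪ D)).ncard < (RSet G X (S0 ∪ D)).ncard) := by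
      intro S0 h hcard hlt
      have : (RSet G X (S0 ∪ D)).ncard ≤ (RSet G X (Sm ∪ D)).ncard :=
        hmaxwrt (j := S0) ⟨h, by omega⟩ (le_of_lt hlt)
      omega
    have hSmmin : MinSepD G D X Y Sm := minsize_minimal hSm hminSm
    have hSmbd := minimal_eq_bd hXD hSmmin
    have hSmne : Sm.Nonempty := by
      rw [Set.nonempty_iff_ne_empty]
      intro h
      rw [h, Set.ncard_empty] at hSmcard
      omega
    obtain ⟨v, hv⟩ := hSmne
    have hvbd : v ∈ Bd G D (RSet G X (Sm ∪ D)) := hSmbd ▸ hv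
    obtain ⟨hvA, hvD, a, ha, hadj⟩ := hvbd
    have hvXY : v ∉ X ∪ Y := fun h => hSm.1.ne_of_mem hv h rfl
    -- n ≥ 1 and k ≥ 1
    have hb1 := hbound Sm0 hSm0
    have hb2 : Sm0.ncard ≤ S1.ncard := hmin0 S1 hS1.1.1
    have hn1 : 1 ≤ n := by omega
    obtain ⟨m, rfl⟩ : ∃ m, n = m + 1 := ⟨n - 1, by omega⟩
    -- split according to whether v ∈ S
    have hsplit : {S : Set W | ImpSepD G D X Y S ∧ S.ncard ≤ k} ⊆
        {S : Set W | (ImpSepD G D X Y S ∧ S.ncard ≤ k) ∧ v ∈ S} ∪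
        {S : Set W | (ImpSepD G D X Y S ∧ S.ncard ≤ k) ∧ v ∉ S} := by
      intro S hS
      by_cases hvS : v ∈ S
      · exact Or.inl ⟨hS, hvS⟩
      · exact Or.inr ⟨hS, hvS⟩
    have hbound1 : {S : Set W | (ImpSepD G D X Y S ∧ S.ncard ≤ k) ∧ v ∈ S}.ncard ≤ 2 ^ m := by
      have hIH := IH m (by omega) (k - 1) X (D ∪ {v})
        (Set.disjoint_union_right.mpr ⟨hXD, Set.disjoint_singleton_right.mpr
          (fun h => hvXY (Or.inl h))⟩)
        (Set.disjoint_union_right.mpr ⟨hYD, Set.disjoint_singleton_right.mpr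
          (fun h => hvXY (Or.inr h))⟩)
        (by
          intro S0 h0
          have h1 := sep_union_v hvXY hvD h0
          have h2 := hbound _ h1
          have hv0 : v ∉ S0 := fun h => h0.2.1.ne_of_mem h (Or.inr rfl) rfl
          rw [Set.union_singleton, Set.ncard_insert_of_notMem hv0 (Set.toFinite _)] at h2
          omega)
      refine le_trans (Set.ncard_le_ncard_of_injOn (fun S => S \ {v}) ?_ ?_
        (Set.toFinite _)) hIH
      · rintro S ⟨⟨hS, hSk⟩, hvS⟩
        have h1 : 1 ≤ S.ncard := by
          have := Set.ncard_pos (s := S) (Set.toFinite _) |>.mpr ⟨v, hvS⟩; omega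
        refine ⟨branch1 hvS hvXY hvD hS, ?_⟩
        rw [Set.ncard_diff_singleton_of_mem hvS]
        omega
      · rintro S1' ⟨-, hv1⟩ S2' ⟨-, hv2⟩ heq
        have heq' : S1' \ {v} = S2' \ {v} := heq
        ext x
        by_cases hx : x = v
        · subst hx; simp [hv1, hv2]
        · constructor
          · intro hxS
            have : x ∈ S1' \ {v} := ⟨hxS, by simp [hx]⟩
            rw [heq'] at this
            exact this.1
          · intro hxS
            have : x ∈ S2' \ {v} := ⟨hxS, by simp [hx]⟩
            rw [← heq'] at this
            exact this.1
    have hbound2 : {S : Set W | (ImpSepD G D X Y S ∧ S.ncard ≤ k) ∧ v ∉ S}.ncard ≤ 2 ^ m := by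
      have hIH := IH m (by omega) k (RSet G X (Sm ∪ D) ∪ {v}) D
        (Set.disjoint_union_left.mpr ⟨Set.disjoint_left.mpr
          (fun {b} hb hbD => not_mem_of_mem_RSet hb (Or.inr hbD)),
          Set.disjoint_singleton_left.mpr hvD⟩)
        hYD
        (by
          intro S0 h0
          have h1 := lambda_increase hXD hSm hmax hminSm hvD hvA ha hadj S0 h0
          have h2 := hbound Sm hSm
          omega)
      refine le_trans (Set.ncard_le_ncard_of_injOn (fun S => S) ?_ ?_ (Set.toFinite _)) hIH
      · rintro S ⟨⟨hS, hSk⟩, hvS⟩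
        exact ⟨branch2 hXD hSm hminSm hS hvS hvD ha hadj, hSk⟩
      · exact fun S1' _ S2' _ h => h
    calc {S : Set W | ImpSepD G D X Y S ∧ S.ncard ≤ k}.ncard
        ≤ ({S : Set W | (ImpSepD G D X Y S ∧ S.ncard ≤ k) ∧ v ∈ S} ∪
           {S : Set W | (ImpSepD G D X Y S ∧ S.ncard ≤ k) ∧ v ∉ S}).ncard :=
          Set.ncard_le_ncard hsplit (Set.toFinite _)
      _ ≤ {S : Set W | (ImpSepD G D X Y S ∧ S.ncard ≤ k) ∧ v ∈ S}.ncard +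
          {S : Set W | (ImpSepD G D X Y S ∧ S.ncard ≤ k) ∧ v ∉ S}.ncard :=
          Set.ncard_union_le _ _
      _ ≤ 2 ^ m + 2 ^ m := Nat.add_le_add hbound1 hbound2
      _ = 2 ^ (m + 1) := by rw [pow_succ]; omega

lemma impD_empty : ImpSepD G ∅ X Y S ↔ ImportantSep G X Y S := by
  have hsep : ∀ S' : Set W, SepD G ∅ X Y S' ↔ IsXYSep G X Y S' := by
    intro S'
    constructor
    · rintro ⟨h1, -, h3⟩
      exact ⟨h1, by simpa [Set.union_empty] using h3⟩
    · rintro ⟨h1, h3⟩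
      exact ⟨h1, Set.disjoint_empty _, by simpa [Set.union_empty] using h3⟩
  constructor
  · rintro ⟨⟨h1, h2⟩, h3⟩
    refine ⟨⟨(hsep S).mp h1, fun S' hS' h => h2 S' hS' ((hsep S').mpr h)⟩, ?_⟩
    rintro ⟨S', hS', hne, hcard, hcov⟩
    exact h3 ⟨S', (hsep S').mpr hS', hne, hcard, by simpa [Set.union_empty, Covers] using hcov⟩
  · rintro ⟨⟨h1, h2⟩, h3⟩
    refine ⟨⟨(hsep S).mpr h1, fun S' hS' h => h2 S' hS' ((hsep S').mp h)⟩, ?_⟩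
    rintro ⟨S', hS', hne, hcard, hcov⟩
    exact h3 ⟨S', (hsep S').mp hS', hne, hcard, by simpa [Set.union_empty, Covers] using hcov⟩

end SepProof

/-- for disjoint `X`, `Y` with the closed neighbourhood of `X` connected,
there are at most `4^k` important `X`–`Y` separators of size at most `k`. -/
theorem stmt10 {W : Type} [Fintype W] (G : SimpleGraph W) (X Y : Set W)
    (hdisj : Disjoint X Y) (hconn : SepTools.NbhdConnected G X) (k : ℕ) :
    {S : Set W | SepTools.ImportantSep G X Y S ∧ S.ncard ≤ k}.ncard ≤ 4 ^ k := by
  have h := SepProof.main (G := G) (Y := Y) (2 * k) k X ∅ (Set.disjoint_empty _)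
    (Set.disjoint_empty _) (fun S0 _ => by omega)
  have hset : {S : Set W | SepTools.ImportantSep G X Y S ∧ S.ncard ≤ k} =
      {S : Set W | SepProof.ImpSepD G ∅ X Y S ∧ S.ncard ≤ k} := by
    ext S
    simp only [Set.mem_setOf_eq, SepProof.impD_empty]
  rw [hset]
  calc {S : Set W | SepProof.ImpSepD G ∅ X Y S ∧ S.ncard ≤ k}.ncard
      ≤ 2 ^ (2 * k) := h
    _ = 4 ^ k := by rw [pow_mul]; norm_num
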